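/- Let (M',0) be a germ of real analytic hypersurface of ℂ^n, n ≥ 2, encoded in normal coordinates by Θ̄', with conjugate series expansion Θ'(ζ',w',z') = Σ_{β∈ℕ^{n-1}, β≠0} ζ'^β Θ'_β(w',z') and convention Θ'_0(w',z') := z'. If M' is Segre-nondegenerate at 0, i.e. there exist β^1,…,β^{n-1} ∈ ℕ^{n-1}∖{0} such that det(∂Θ'_{β^i}/∂w'_j(w',0))_{1≤i,j≤n-1} ≢ 0 in ℂ{w'}, then M' is holomorphically nondegenerate at 0: with the same β^1,…,β^{n-1} and β^n := 0, det(∂Θ'_{β^i}/∂t'_j(w',z'))_{1≤i,j≤n} ≢ 0 in ℂ{w',z'}, where t' = (w',z'). -/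

import Mathlib

open scoped Classical

noncomputable section

/-- Total degree of a multi-exponent. -/
def degf {σ : Type*} (d : σ →₀ ℕ) : ℕ := d.sum fun _ k => k

/-- A formal power series has a positive radius of convergence. -/
def IsConv {σ : Type*} (f : MvPowerSeries σ ℂ) : Prop :=
  ∃ C r : ℝ, 0 < r ∧ ∀ d : σ →₀ ℕ, ‖MvPowerSeries.coeff d f‖ * r ^ degf d ≤ C

/-- Formal partial derivative with respect to the variable `i`. -/
def pder {σ : Type*} (i : σ) (f : MvPowerSeries σ ℂ) : MvPowerSeries σ ℂ :=
  fun d => ((d i + 1 : ℕ) : ℂ) * MvPowerSeries.coeff (d + Finsupp.single i 1) f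

/-- Substitution (composition) of formal power series: `msubst a f = f ∘ a`.
This formula is the correct composition whenever every `a s` has zero constant term. -/
def msubst {σ τ : Type*} [Fintype σ] [DecidableEq σ] [DecidableEq τ]
    (a : σ → MvPowerSeries τ ℂ) (f : MvPowerSeries σ ℂ) : MvPowerSeries τ ℂ :=
  fun e => ∑ d ∈ Finset.Iic (∑ s : σ, Finsupp.single s (degf e)),
    MvPowerSeries.coeff d f * MvPowerSeries.coeff e (d.prod fun s k => (a s) ^ k)

/-- The series with complex-conjugated coefficients. -/
def conjS {σ : Type*} (f : MvPowerSeries σ ℂ) : MvPowerSeries σ ℂ :=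
  MvPowerSeries.map (σ := σ) (starRingEnd ℂ) f

/-- Absolute summability of the monomials of `f` at the point `x`. -/
def SummableAt {σ : Type*} (f : MvPowerSeries σ ℂ) (x : σ → ℂ) : Prop :=
  Summable fun d : σ →₀ ℕ => ‖MvPowerSeries.coeff d f‖ * d.prod fun i k => ‖x i‖ ^ k

/-- The value at `x` of (the sum of) the series `f`. -/
def evalAt {σ : Type*} (f : MvPowerSeries σ ℂ) (x : σ → ℂ) : ℂ :=
  ∑' d : σ →₀ ℕ, MvPowerSeries.coeff d f * d.prod fun i k => x i ^ k

/- ### CR geometry in normal coordinates.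
`m = n - 1 ≥ 1`.  The variables of `Θ̄` are indexed by `Fin m ⊕ (Fin m ⊕ Unit)`:
the first block is the first (vector) argument, the second block the last two arguments. -/

variable (m : ℕ)

/-- `Θ̄(0,ζ,ξ) ≡ 0` and `Θ̄(w,0,ξ) ≡ 0` (normality), coefficientwise. -/
def NormVanish (Θ : MvPowerSeries (Fin m ⊕ (Fin m ⊕ Unit)) ℂ) : Prop :=
  (∀ d : (Fin m ⊕ (Fin m ⊕ Unit)) →₀ ℕ,
      (∀ j : Fin m, d (Sum.inl j) = 0) → MvPowerSeries.coeff d Θ = 0) ∧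
  (∀ d : (Fin m ⊕ (Fin m ⊕ Unit)) →₀ ℕ,
      (∀ j : Fin m, d (Sum.inr (Sum.inl j)) = 0) → MvPowerSeries.coeff d Θ = 0)

/-- The complexified defining series `r(t,τ) = z - ξ - iΘ̄(w,ζ,ξ)`, in the
variables `(w,z,ζ,ξ)` indexed by `(Fin m ⊕ Unit) ⊕ (Fin m ⊕ Unit)`. -/
def rSeries (Θ : MvPowerSeries (Fin m ⊕ (Fin m ⊕ Unit)) ℂ) :
    MvPowerSeries ((Fin m ⊕ Unit) ⊕ (Fin m ⊕ Unit)) ℂ :=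
  MvPowerSeries.X (Sum.inl (Sum.inr ())) - MvPowerSeries.X (Sum.inr (Sum.inr ())) -
    (MvPowerSeries.C (R := ℂ)) Complex.I *
      msubst (Sum.elim (fun j => MvPowerSeries.X (Sum.inl (Sum.inl j)))
        (Sum.elim (fun j => MvPowerSeries.X (Sum.inr (Sum.inl j)))
          (fun _ => MvPowerSeries.X (Sum.inr (Sum.inr ()))))) Θ

/-- The conjugate complexified defining series `r̄(τ,t) = ξ - z + iΘ(ζ,w,z)`, in the
variables `(w,z,ζ,ξ)`. -/
def rbarSeries (Θ : MvPowerSeries (Fin m ⊕ (Fin m ⊕ Unit)) ℂ) :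
    MvPowerSeries ((Fin m ⊕ Unit) ⊕ (Fin m ⊕ Unit)) ℂ :=
  MvPowerSeries.X (Sum.inr (Sum.inr ())) - MvPowerSeries.X (Sum.inl (Sum.inr ())) +
    (MvPowerSeries.C (R := ℂ)) Complex.I *
      msubst (Sum.elim (fun j => MvPowerSeries.X (Sum.inr (Sum.inl j)))
        (Sum.elim (fun j => MvPowerSeries.X (Sum.inl (Sum.inl j)))
          (fun _ => MvPowerSeries.X (Sum.inl (Sum.inr ()))))) (conjS Θ)

/-- Reality of the encoded hypersurface:
`ξ - z + iΘ(ζ,w,z) = α(w,z,ζ,ξ) ⬝ (z - ξ - iΘ̄(w,ζ,ξ))` for a unit `α`. -/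
def RealityCond (Θ : MvPowerSeries (Fin m ⊕ (Fin m ⊕ Unit)) ℂ) : Prop :=
  ∃ α : MvPowerSeries ((Fin m ⊕ Unit) ⊕ (Fin m ⊕ Unit)) ℂ,
    IsConv α ∧ MvPowerSeries.constantCoeff (R := ℂ) α ≠ 0 ∧
      rbarSeries m Θ = α * rSeries m Θ

/-- `Θ̄` encodes a germ of real analytic hypersurface in normal coordinates. -/
def NormalEnc (Θ : MvPowerSeries (Fin m ⊕ (Fin m ⊕ Unit)) ℂ) : Prop :=
  IsConv Θ ∧ NormVanish m Θ ∧ RealityCond m Θ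

/-- Minimality at `0` : `Θ̄(w,ζ,0) ≢ 0`. -/
def MinimalAt0 (Θ : MvPowerSeries (Fin m ⊕ (Fin m ⊕ Unit)) ℂ) : Prop :=
  ∃ d : (Fin m ⊕ (Fin m ⊕ Unit)) →₀ ℕ,
    d (Sum.inr (Sum.inr ())) = 0 ∧ MvPowerSeries.coeff d Θ ≠ 0

/-- The coefficient series `Θ'_β(w',z')` of `ζ'^β` in `Θ'(ζ',w',z')` (the series with
conjugated coefficients), with the convention `Θ'_0(w',z') := z'`. -/
def thetaCoef (Θ : MvPowerSeries (Fin m ⊕ (Fin m ⊕ Unit)) ℂ) (β : Fin m →₀ ℕ) :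
    MvPowerSeries (Fin m ⊕ Unit) ℂ :=
  if β = 0 then MvPowerSeries.X (Sum.inr ())
  else fun d => MvPowerSeries.coeff (Finsupp.sumElim β d) (conjS Θ)

/-- The substitution `ξ := z - iΘ(ζ,w,z)`, a series in the variables `(w,z,ζ)`
indexed by `(Fin m ⊕ Unit) ⊕ Fin m`. -/
def xiSub (Θ : MvPowerSeries (Fin m ⊕ (Fin m ⊕ Unit)) ℂ) :
    MvPowerSeries ((Fin m ⊕ Unit) ⊕ Fin m) ℂ :=
  MvPowerSeries.X (Sum.inl (Sum.inr ())) -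
    (MvPowerSeries.C (R := ℂ)) Complex.I *
      msubst (Sum.elim (fun j => MvPowerSeries.X (Sum.inr j))
        (Sum.elim (fun j => MvPowerSeries.X (Sum.inl (Sum.inl j)))
          (fun _ => MvPowerSeries.X (Sum.inl (Sum.inr ()))))) (conjS Θ)

/-- The assignment sending `(ζ,ξ)` to `(ζ, z - iΘ(ζ,w,z))`, with values in the
variables `(w,z,ζ)`. -/
def tauSub (Θ : MvPowerSeries (Fin m ⊕ (Fin m ⊕ Unit)) ℂ) :
    (Fin m ⊕ Unit) → MvPowerSeries ((Fin m ⊕ Unit) ⊕ Fin m) ℂ :=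
  Sum.elim (fun j => MvPowerSeries.X (Sum.inr j)) (fun _ => xiSub m Θ)

/-- `h = (g,f)` is a formal CR map `(M,0) → (M',0)` :  `h(0) = 0` and
`f(w,z) - f̄(ζ,ξ) - iΘ̄'(g(w,z), ḡ(ζ,ξ), f̄(ζ,ξ)) ≡ 0` in `ℂ⟦w,z,ζ⟧` after the
substitution `ξ := z - iΘ(ζ,w,z)`.  The components of `h` are indexed by
`Fin m ⊕ Unit`: `g = h ∘ Sum.inl` and `f = h (Sum.inr ())`. -/
def IsCRMap (Θ Θ' : MvPowerSeries (Fin m ⊕ (Fin m ⊕ Unit)) ℂ)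
    (h : (Fin m ⊕ Unit) → MvPowerSeries (Fin m ⊕ Unit) ℂ) : Prop :=
  (∀ k, MvPowerSeries.constantCoeff (R := ℂ) (h k) = 0) ∧
  msubst (fun k => MvPowerSeries.X (Sum.inl k)) (h (Sum.inr ())) -
      msubst (tauSub m Θ) (conjS (h (Sum.inr ()))) -
      (MvPowerSeries.C (R := ℂ)) Complex.I *
        msubst (Sum.elim
            (fun j => msubst (fun k => MvPowerSeries.X (Sum.inl k)) (h (Sum.inl j)))
            (Sum.elim (fun j => msubst (tauSub m Θ) (conjS (h (Sum.inl j))))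
              (fun _ => msubst (tauSub m Θ) (conjS (h (Sum.inr ())))))) Θ'
    = 0

/-- `h` is invertible : nonzero Jacobian determinant at `0`. -/
def InvertibleMap (h : (Fin m ⊕ Unit) → MvPowerSeries (Fin m ⊕ Unit) ℂ) : Prop :=
  Matrix.det (Matrix.of fun j k : Fin m ⊕ Unit =>
    MvPowerSeries.coeff (Finsupp.single k 1) (h j)) ≠ 0

/-- Holomorphic nondegeneracy at `0` witnessed by the multiindices `B i ≠ 0`
(and `β^n := 0`) : `det(∂Θ'_{β^i}/∂t'_j) ≢ 0`. -/
def HoloNondegWith (Θ' : MvPowerSeries (Fin m ⊕ (Fin m ⊕ Unit)) ℂ)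
    (B : Fin m → (Fin m →₀ ℕ)) : Prop :=
  (∀ i, B i ≠ 0) ∧
  Matrix.det (Matrix.of fun i j : Fin m ⊕ Unit =>
    pder j (thetaCoef m Θ' (Sum.elim B (fun _ => (0 : Fin m →₀ ℕ)) i))) ≠ 0

/-- Holomorphic nondegeneracy at `0`. -/
def HoloNondeg (Θ' : MvPowerSeries (Fin m ⊕ (Fin m ⊕ Unit)) ℂ) : Prop :=
  ∃ B : Fin m → (Fin m →₀ ℕ), HoloNondegWith m Θ' B

/-- The reflection function `ℛ'_h(w,z,λ̄',μ̄') = μ̄' - f(w,z) + i Σ_{β≠0} λ̄'^β Θ'_β(g(w,z),f(w,z))`,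
a series in the variables `(w,z)` (first block) and `(λ̄',μ̄')` (second block).
The series `i Σ_{β≠0} λ̄'^β Θ'_β(g(w,z),f(w,z))`, defined coefficientwise. -/
def reflTail (Θ' : MvPowerSeries (Fin m ⊕ (Fin m ⊕ Unit)) ℂ)
    (h : (Fin m ⊕ Unit) → MvPowerSeries (Fin m ⊕ Unit) ℂ) :
    MvPowerSeries ((Fin m ⊕ Unit) ⊕ (Fin m ⊕ Unit)) ℂ :=
  fun D =>
    let p := Finsupp.sumFinsuppEquivProdFinsupp D
    let q := Finsupp.sumFinsuppEquivProdFinsupp p.2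
    if q.2 = 0 ∧ q.1 ≠ 0 then
      Complex.I * MvPowerSeries.coeff p.1 (msubst h (thetaCoef m Θ' q.1))
    else 0

def reflFn (Θ' : MvPowerSeries (Fin m ⊕ (Fin m ⊕ Unit)) ℂ)
    (h : (Fin m ⊕ Unit) → MvPowerSeries (Fin m ⊕ Unit) ℂ) :
    MvPowerSeries ((Fin m ⊕ Unit) ⊕ (Fin m ⊕ Unit)) ℂ :=
  MvPowerSeries.X (Sum.inr (Sum.inr ())) -
    msubst (fun k => MvPowerSeries.X (Sum.inl k)) (h (Sum.inr ())) +
    reflTail m Θ' h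


/-- Restriction `ξ := 0` : the series `Θ̄(w,ζ,0)` in the variables `(w,ζ)`
indexed by `Fin m ⊕ Fin m`. -/
def restXi0 (Θ : MvPowerSeries (Fin m ⊕ (Fin m ⊕ Unit)) ℂ) :
    MvPowerSeries (Fin m ⊕ Fin m) ℂ :=
  msubst (Sum.elim (fun j => MvPowerSeries.X (Sum.inl j))
    (Sum.elim (fun j => MvPowerSeries.X (Sum.inr j)) (fun _ => 0))) Θ

/-- Restriction `z := 0` of a series in the variables `(w,z)`. -/
def restZ0 (f : MvPowerSeries (Fin m ⊕ Unit) ℂ) : MvPowerSeries (Fin m) ℂ :=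
  msubst (Sum.elim MvPowerSeries.X (fun _ => 0)) f

/-- `Θ'_β(g(w,z), f(w,z))`, the composition of the coefficient series `Θ'_β`
with the formal map `h = (g,f)`. -/
def thetaComp (Θ' : MvPowerSeries (Fin m ⊕ (Fin m ⊕ Unit)) ℂ)
    (h : (Fin m ⊕ Unit) → MvPowerSeries (Fin m ⊕ Unit) ℂ) (β : Fin m →₀ ℕ) :
    MvPowerSeries (Fin m ⊕ Unit) ℂ :=
  msubst h (thetaCoef m Θ' β)

/-- The reflection function restricted to the first Segre chain `z = 0`, a series in
the variables `(w, λ̄', μ̄')` indexed by `Fin m ⊕ (Fin m ⊕ Unit)`. -/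
def reflAt0 (Θ' : MvPowerSeries (Fin m ⊕ (Fin m ⊕ Unit)) ℂ)
    (h : (Fin m ⊕ Unit) → MvPowerSeries (Fin m ⊕ Unit) ℂ) :
    MvPowerSeries (Fin m ⊕ (Fin m ⊕ Unit)) ℂ :=
  msubst (Sum.elim (Sum.elim (fun j => MvPowerSeries.X (Sum.inl j)) (fun _ => 0))
    (fun k => MvPowerSeries.X (Sum.inr k))) (reflFn m Θ' h)

/-- Segre nondegeneracy at `0` witnessed by the multiindices `B i ≠ 0` :
`det(∂Θ'_{β^i}/∂w'_j (w',0))_{1≤i,j≤n-1} ≢ 0`. -/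
def SegreNondegWith (Θ' : MvPowerSeries (Fin m ⊕ (Fin m ⊕ Unit)) ℂ)
    (B : Fin m → (Fin m →₀ ℕ)) : Prop :=
  (∀ i, B i ≠ 0) ∧
  Matrix.det (Matrix.of fun i j : Fin m =>
    restZ0 m (pder (Sum.inl j) (thetaCoef m Θ' (B i)))) ≠ 0

/-- The parametrization of the second Segre chain : the assignment
`(w,z) ↦ (w, iΘ̄(w,ζ,0))`, with values in the variables `(w,ζ)`. -/
def segre2 (Θ : MvPowerSeries (Fin m ⊕ (Fin m ⊕ Unit)) ℂ) :
    (Fin m ⊕ Unit) → MvPowerSeries (Fin m ⊕ Fin m) ℂ :=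
  Sum.elim (fun j => MvPowerSeries.X (Sum.inl j))
    (fun _ => (MvPowerSeries.C (R := ℂ)) Complex.I * restXi0 m Θ)

/-- A nontrivial holomorphic vector field `L' = Σ a_k ∂/∂t'_k` with convergent
coefficients which is tangent to the hypersurface encoded by `Θ'`, i.e.
`Σ_k a_k(w',z') ∂_{t'_k}[ξ' - z' + iΘ'(ζ',w',z')]` lies in the ideal generated by
`ξ' - z' + iΘ'(ζ',w',z')` (with a convergent cofactor). -/
def IsTangentField (Θ' : MvPowerSeries (Fin m ⊕ (Fin m ⊕ Unit)) ℂ)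
    (a : (Fin m ⊕ Unit) → MvPowerSeries (Fin m ⊕ Unit) ℂ) : Prop :=
  (∀ k, IsConv (a k)) ∧
  ∃ q : MvPowerSeries ((Fin m ⊕ Unit) ⊕ (Fin m ⊕ Unit)) ℂ, IsConv q ∧
    (∑ k : Fin m ⊕ Unit,
        msubst (fun j => MvPowerSeries.X (Sum.inl j)) (a k) *
          pder (Sum.inl k) (rbarSeries m Θ'))
      = q * rbarSeries m Θ'


namespace SegreAux

open MvPowerSeries Finsupp

variable {m : ℕ}

/-- Embedding of exponents in `w` into exponents in `(w,z)` with `z`-exponent `0`. -/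
def emb (e : Fin m →₀ ℕ) : (Fin m ⊕ Unit) →₀ ℕ := Finsupp.sumElim e 0

@[simp] lemma emb_inl (e : Fin m →₀ ℕ) (j : Fin m) : emb e (Sum.inl j) = e j := rfl

@[simp] lemma emb_inr (e : Fin m →₀ ℕ) (u : Unit) : emb e (Sum.inr u) = 0 := rfl

lemma emb_add (e e' : Fin m →₀ ℕ) : emb (e + e') = emb e + emb e' := by
  ext s; cases s <;> simp

lemma emb_zero : emb (0 : Fin m →₀ ℕ) = 0 := by
  ext s; cases s <;> simp

lemma emb_single (j : Fin m) (n : ℕ) :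
    emb (Finsupp.single j n) = Finsupp.single (Sum.inl j : Fin m ⊕ Unit) n := by
  ext s
  cases s with
  | inl j' => simp [Finsupp.single_apply]
  | inr u => simp [Finsupp.single_apply]

lemma emb_eq_zero {e : Fin m →₀ ℕ} : emb e = 0 ↔ e = 0 := by
  constructor
  · intro h
    ext j
    have := congrArg (fun d : (Fin m ⊕ Unit) →₀ ℕ => d (Sum.inl j)) h
    simpa using this
  · rintro rfl; exact emb_zero

/-- Projection of exponents in `(w,z)` onto exponents in `w`. -/
def proj (d : (Fin m ⊕ Unit) →₀ ℕ) : Fin m →₀ ℕ :=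
  Finsupp.comapDomain Sum.inl d Sum.inl_injective.injOn

@[simp] lemma proj_apply (d : (Fin m ⊕ Unit) →₀ ℕ) (j : Fin m) :
    proj d j = d (Sum.inl j) := rfl

lemma emb_proj {d : (Fin m ⊕ Unit) →₀ ℕ} (h : d (Sum.inr ()) = 0) : emb (proj d) = d := by
  ext s
  cases s with
  | inl j => simp
  | inr u => cases u; simp [h]

@[simp] lemma proj_emb (e : Fin m →₀ ℕ) : proj (emb e) = e := by
  ext j; simp

/-- The coefficientwise substitution `z := 0`, as a ring homomorphism. -/
def phi (m : ℕ) : MvPowerSeries (Fin m ⊕ Unit) ℂ →+* MvPowerSeries (Fin m) ℂ where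
  toFun f := fun e => MvPowerSeries.coeff (emb e) f
  map_one' := by
    apply MvPowerSeries.ext
    intro e
    have h : MvPowerSeries.coeff e
        ((fun e => MvPowerSeries.coeff (emb e) (1 : MvPowerSeries (Fin m ⊕ Unit) ℂ)) :
          MvPowerSeries (Fin m) ℂ) = MvPowerSeries.coeff (emb e) 1 := rfl
    rw [h, MvPowerSeries.coeff_one, MvPowerSeries.coeff_one]
    simp [emb_eq_zero]
  map_mul' f g := by
    apply MvPowerSeries.ext
    intro e
    have h1 : MvPowerSeries.coeff e
        ((fun e => MvPowerSeries.coeff (emb e) (f * g)) : MvPowerSeries (Fin m) ℂ)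
        = MvPowerSeries.coeff (emb e) (f * g) := rfl
    have h2 : ∀ (F : MvPowerSeries (Fin m ⊕ Unit) ℂ) (d : Fin m →₀ ℕ),
        MvPowerSeries.coeff d
          ((fun e => MvPowerSeries.coeff (emb e) F) : MvPowerSeries (Fin m) ℂ)
        = MvPowerSeries.coeff (emb d) F := fun _ _ => rfl
    rw [h1, MvPowerSeries.coeff_mul]
    refine Eq.trans ?_ (MvPowerSeries.coeff_mul _ _ _).symm
    refine Finset.sum_nbij' (fun q => (proj q.1, proj q.2)) (fun p => (emb p.1, emb p.2))
      ?_ ?_ ?_ ?_ ?_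
    · intro q hq
      rw [Finset.HasAntidiagonal.mem_antidiagonal] at hq ⊢
      ext j
      have := congrArg (fun d : (Fin m ⊕ Unit) →₀ ℕ => d (Sum.inl j)) hq
      simpa using this
    · intro p hp
      rw [Finset.HasAntidiagonal.mem_antidiagonal] at hp ⊢
      rw [← emb_add, hp]
    · intro q hq
      rw [Finset.HasAntidiagonal.mem_antidiagonal] at hq
      have hz : q.1 (Sum.inr ()) = 0 ∧ q.2 (Sum.inr ()) = 0 := by
        have := congrArg (fun d : (Fin m ⊕ Unit) →₀ ℕ => d (Sum.inr ())) hq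
        simp only [Finsupp.add_apply] at this
        simp only [emb_inr] at this
        omega
      have e1 := emb_proj hz.1
      have e2 := emb_proj hz.2
      exact Prod.ext e1 e2
    · intro p _
      exact Prod.ext (proj_emb _) (proj_emb _)
    · intro q hq
      rw [Finset.HasAntidiagonal.mem_antidiagonal] at hq
      have hz : q.1 (Sum.inr ()) = 0 ∧ q.2 (Sum.inr ()) = 0 := by
        have := congrArg (fun d : (Fin m ⊕ Unit) →₀ ℕ => d (Sum.inr ())) hq
        simp only [Finsupp.add_apply] at this
        simp only [emb_inr] at this
        omega
      rw [h2, h2, emb_proj hz.1, emb_proj hz.2]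
  map_zero' := by
    apply MvPowerSeries.ext
    intro e
    have h : MvPowerSeries.coeff e
        ((fun e => MvPowerSeries.coeff (emb e) (0 : MvPowerSeries (Fin m ⊕ Unit) ℂ)) :
          MvPowerSeries (Fin m) ℂ) = MvPowerSeries.coeff (emb e) 0 := rfl
    rw [h, map_zero, map_zero]
  map_add' f g := by
    apply MvPowerSeries.ext
    intro e
    have h : MvPowerSeries.coeff e
        ((fun e => MvPowerSeries.coeff (emb e) (f + g)) : MvPowerSeries (Fin m) ℂ)
        = MvPowerSeries.coeff (emb e) (f + g) := rfl
    have h2 : ∀ (F : MvPowerSeries (Fin m ⊕ Unit) ℂ) (d : Fin m →₀ ℕ),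
        MvPowerSeries.coeff d
          ((fun e => MvPowerSeries.coeff (emb e) F) : MvPowerSeries (Fin m) ℂ)
        = MvPowerSeries.coeff (emb d) F := fun _ _ => rfl
    rw [h, map_add]
    refine Eq.trans ?_ (map_add _ _ _).symm
    rw [h2, h2]

lemma coeff_phi (f : MvPowerSeries (Fin m ⊕ Unit) ℂ) (e : Fin m →₀ ℕ) :
    MvPowerSeries.coeff e (phi m f) = MvPowerSeries.coeff (emb e) f := rfl

/-- The substituting family of `restZ0`. -/
def aZ : (Fin m ⊕ Unit) → MvPowerSeries (Fin m) ℂ :=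
  Sum.elim MvPowerSeries.X (fun _ => 0)

lemma prod_aZ_emb (e : Fin m →₀ ℕ) :
    ((emb e).prod fun s k => (aZ s) ^ k) = MvPowerSeries.monomial e 1 := by
  induction e using Finsupp.induction with
  | zero => rw [emb_zero, Finsupp.prod_zero_index, MvPowerSeries.monomial_zero_one]
  | single_add j n f hjf hn ih =>
    rw [emb_add, Finsupp.prod_add_index' (fun s => pow_zero _) (fun s k l => pow_add _ _ _),
      ih, emb_single, Finsupp.prod_single_index (h := fun s k => aZ s ^ k) (pow_zero _)]
    have : (aZ (Sum.inl j : Fin m ⊕ Unit)) ^ n = MvPowerSeries.monomial (Finsupp.single j n) 1 :=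
      MvPowerSeries.X_pow_eq j n
    rw [this, MvPowerSeries.monomial_mul_monomial, one_mul]

lemma prod_aZ_ne (d : (Fin m ⊕ Unit) →₀ ℕ) (h : d (Sum.inr ()) ≠ 0) :
    (d.prod fun s k => (aZ s) ^ k) = 0 := by
  have hmem : (Sum.inr () : Fin m ⊕ Unit) ∈ d.support := Finsupp.mem_support_iff.2 h
  refine Finset.prod_eq_zero hmem ?_
  show (aZ (Sum.inr () : Fin m ⊕ Unit)) ^ (d (Sum.inr ())) = 0
  have : aZ (Sum.inr () : Fin m ⊕ Unit) = (0 : MvPowerSeries (Fin m) ℂ) := rfl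
  rw [this, zero_pow h]

lemma apply_le_degf (e : Fin m →₀ ℕ) (j : Fin m) : e j ≤ degf e := by
  by_cases h : e j = 0
  · simp [h]
  · exact Finset.single_le_sum (f := fun i => e i) (fun i _ => Nat.zero_le _)
      (Finsupp.mem_support_iff.2 h)

lemma restZ0_eq (f : MvPowerSeries (Fin m ⊕ Unit) ℂ) : restZ0 m f = phi m f := by
  apply MvPowerSeries.ext
  intro e
  have hL : MvPowerSeries.coeff e (restZ0 m f)
      = ∑ d ∈ Finset.Iic (∑ s : Fin m ⊕ Unit, Finsupp.single s (degf e)),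
          MvPowerSeries.coeff d f *
            MvPowerSeries.coeff e (d.prod fun s k => (aZ s) ^ k) := rfl
  rw [hL, coeff_phi]
  have hmem : emb e ∈ Finset.Iic (∑ s : Fin m ⊕ Unit, Finsupp.single s (degf e)) := by
    rw [Finset.mem_Iic, Finsupp.le_def]
    intro s
    have hS : (∑ s' : Fin m ⊕ Unit, Finsupp.single s' (degf e)) s = degf e := by
      rw [Finsupp.finset_sum_apply]
      simp [Finsupp.single_apply]
    rw [hS]
    cases s with
    | inl j => simpa using apply_le_degf e j
    | inr u => simp
  rw [Finset.sum_eq_single_of_mem (emb e) hmem ?side]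
  · rw [prod_aZ_emb, MvPowerSeries.coeff_monomial_same, mul_one]
  case side =>
    intro d _ hne
    by_cases hd : d (Sum.inr ()) = 0
    · have hdm : d = emb (proj d) := (emb_proj hd).symm
      rw [hdm, prod_aZ_emb, MvPowerSeries.coeff_monomial]
      rw [if_neg, mul_zero]
      intro hEq
      apply hne
      rw [hdm, hEq]
    · rw [prod_aZ_ne d hd, map_zero, mul_zero]

lemma thetaCoef_zero (m : ℕ) (Θ' : MvPowerSeries (Fin m ⊕ (Fin m ⊕ Unit)) ℂ) :
    thetaCoef m Θ' 0 = MvPowerSeries.X (Sum.inr ()) := if_pos rfl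

lemma pder_inl_X (j : Fin m) :
    pder (Sum.inl j) (MvPowerSeries.X (Sum.inr ()) : MvPowerSeries (Fin m ⊕ Unit) ℂ) = 0 := by
  apply MvPowerSeries.ext
  intro d
  have h : MvPowerSeries.coeff d
      (pder (Sum.inl j) (MvPowerSeries.X (Sum.inr ()) : MvPowerSeries (Fin m ⊕ Unit) ℂ))
      = ((d (Sum.inl j) + 1 : ℕ) : ℂ) *
        MvPowerSeries.coeff (d + Finsupp.single (Sum.inl j) 1)
          (MvPowerSeries.X (Sum.inr ())) := rfl
  rw [h, MvPowerSeries.coeff_X, if_neg, mul_zero, map_zero]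
  intro hEq
  have := congrArg (fun v : (Fin m ⊕ Unit) →₀ ℕ => v (Sum.inl j)) hEq
  simp [Finsupp.single_apply] at this

lemma pder_inr_X :
    pder (Sum.inr () : Fin m ⊕ Unit)
      (MvPowerSeries.X (Sum.inr ()) : MvPowerSeries (Fin m ⊕ Unit) ℂ) = 1 := by
  apply MvPowerSeries.ext
  intro d
  have h : MvPowerSeries.coeff d
      (pder (Sum.inr ()) (MvPowerSeries.X (Sum.inr ()) : MvPowerSeries (Fin m ⊕ Unit) ℂ))
      = ((d (Sum.inr ()) + 1 : ℕ) : ℂ) *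
        MvPowerSeries.coeff (d + Finsupp.single (Sum.inr ()) 1)
          (MvPowerSeries.X (Sum.inr ())) := rfl
  rw [h, MvPowerSeries.coeff_X, MvPowerSeries.coeff_one]
  by_cases hd : d = 0
  · subst hd; simp
  · rw [if_neg, if_neg hd, mul_zero]
    intro hEq
    apply hd
    have : d + Finsupp.single (Sum.inr () : Fin m ⊕ Unit) 1
        = 0 + Finsupp.single (Sum.inr ()) 1 := by rw [hEq, zero_add]
    exact add_right_cancel this

end SegreAux

/-- **Lemma 5.15.** If `(M',0)` is Segre nondegenerate at `0`, witnessed by the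
multiindices `β^1,…,β^{n-1} ≠ 0`, then with the same multiindices (and `β^n := 0`)
it is holomorphically nondegenerate at `0`. -/
theorem segre_nondegenerate_implies_holomorphically_nondegenerate
    (m : ℕ) (hm : 1 ≤ m)
    (Θ' : MvPowerSeries (Fin m ⊕ (Fin m ⊕ Unit)) ℂ)
    (hconv : IsConv Θ') (hnorm : NormVanish m Θ')
    (B : Fin m → (Fin m →₀ ℕ))
    (hSegre : SegreNondegWith m Θ' B) :
    HoloNondegWith m Θ' B := by
  obtain ⟨hB, hdet⟩ := hSegre
  refine ⟨hB, ?_⟩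
  classical
  set A : Matrix (Fin m) (Fin m) (MvPowerSeries (Fin m ⊕ Unit) ℂ) :=
    Matrix.of fun i j => pder (Sum.inl j) (thetaCoef m Θ' (B i)) with hA
  set Bu : Matrix (Fin m) Unit (MvPowerSeries (Fin m ⊕ Unit) ℂ) :=
    Matrix.of fun i _ => pder (Sum.inr ()) (thetaCoef m Θ' (B i)) with hBu
  have hblock : (Matrix.of fun i j : Fin m ⊕ Unit =>
      pder j (thetaCoef m Θ' (Sum.elim B (fun _ => (0 : Fin m →₀ ℕ)) i)))
      = Matrix.fromBlocks A Bu 0 1 := by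
    apply Matrix.ext
    intro i j
    cases i with
    | inl i =>
      cases j with
      | inl j => rfl
      | inr u => cases u; rfl
    | inr u =>
      cases u
      cases j with
      | inl j =>
        show pder (Sum.inl j) (thetaCoef m Θ' (0 : Fin m →₀ ℕ)) = (0 : Matrix Unit (Fin m) (MvPowerSeries (Fin m ⊕ Unit) ℂ)) () j
        rw [SegreAux.thetaCoef_zero, SegreAux.pder_inl_X]
        rfl
      | inr u' =>
        cases u'
        show pder (Sum.inr ()) (thetaCoef m Θ' (0 : Fin m →₀ ℕ)) = (1 : Matrix Unit Unit _) () ()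
        rw [SegreAux.thetaCoef_zero, SegreAux.pder_inr_X, Matrix.one_apply_eq]
  rw [hblock, Matrix.det_fromBlocks_zero₂₁, Matrix.det_one, mul_one]
  intro h0
  apply hdet
  have hmap : (Matrix.of fun i j : Fin m =>
      restZ0 m (pder (Sum.inl j) (thetaCoef m Θ' (B i))))
      = (SegreAux.phi m).mapMatrix A := by
    apply Matrix.ext
    intro i j
    show restZ0 m (pder (Sum.inl j) (thetaCoef m Θ' (B i)))
      = SegreAux.phi m (pder (Sum.inl j) (thetaCoef m Θ' (B i)))
    exact SegreAux.restZ0_eq _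
  rw [hmap, ← RingHom.map_det, h0, map_zero]

end
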